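/- Let ν > 0, η ∈ ℝ, let G_x be an n×n and G_y an m×m Hermitian positive semidefinite complex matrix, set A_x = -(ν+iη)G_x, A_y = -(ν+iη)G_y. Let κ, ξ, γ be real numbers, define G(U)_{ij} = −(κ + iξ)|U_{ij}|² U_{ij} + γ U_{ij} on complex n×m matrices, and set L = 3√(κ² + ξ²) δ² + |γ| for some δ ≥ 0. Suppose u, v : [0, τ] → ℂ^{n×m} are differentiable with u' = G(u), v' = G(v), and all entries of u(t) and v(t) have modulus at most δ on [0, τ]. Then ‖exp(τA_x) u(τ) exp(τA_y) − exp(τA_x) v(τ) exp(τA_y)‖_F ≤ e^{L τ} ‖u(0) − v(0)‖_F. -/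

import Mathlib

open scoped BigOperators ComplexOrder

attribute [local instance] Matrix.frobeniusNormedAddCommGroup Matrix.frobeniusNormedSpace

/-- Frobenius norm of a complex matrix. -/
noncomputable def frobNorm {n m : ℕ} (Z : Matrix (Fin n) (Fin m) ℂ) : ℝ :=
  Real.sqrt (∑ i, ∑ j, ‖Z i j‖ ^ 2)

/-- The entrywise nonlinearity `G(U)_{ij} = -(κ + iξ)|U_{ij}|² U_{ij} + γ U_{ij}`. -/
noncomputable def Gnl (κ ξ γ : ℝ) {n m : ℕ} (U : Matrix (Fin n) (Fin m) ℂ) :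
    Matrix (Fin n) (Fin m) ℂ :=
  Matrix.of fun i j =>
    -((κ : ℂ) + (ξ : ℂ) * Complex.I) * ((‖U i j‖ ^ 2 : ℝ) : ℂ) * U i j + (γ : ℂ) * U i j

/-! ### Auxiliary lemmas -/

open scoped Matrix

noncomputable def frobSq {n m : ℕ} (Z : Matrix (Fin n) (Fin m) ℂ) : ℝ :=
  ∑ i, ∑ j, ‖Z i j‖ ^ 2

lemma frobNorm_def' {n m : ℕ} (Z : Matrix (Fin n) (Fin m) ℂ) :
    frobNorm Z = Real.sqrt (frobSq Z) := rfl

lemma frobSq_nonneg {n m : ℕ} (Z : Matrix (Fin n) (Fin m) ℂ) : 0 ≤ frobSq Z :=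
  Finset.sum_nonneg fun _ _ => Finset.sum_nonneg fun _ _ => by positivity

lemma frobSq_eq_trace {n m : ℕ} (Z : Matrix (Fin n) (Fin m) ℂ) :
    frobSq Z = ((Zᴴ * Z).trace).re := by
  rw [Matrix.trace, Complex.re_sum]
  rw [frobSq, Finset.sum_comm]
  refine Finset.sum_congr rfl fun j _ => ?_
  rw [Matrix.diag_apply, Matrix.mul_apply, Complex.re_sum]
  refine Finset.sum_congr rfl fun i _ => ?_
  rw [Matrix.conjTranspose_apply]
  rw [Complex.star_def, mul_comm, Complex.mul_conj, Complex.ofReal_re, Complex.normSq_eq_norm_sq]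

lemma frobSq_mul_left {n m : ℕ} (U : Matrix (Fin n) (Fin n) ℂ)
    (h : star U * U = 1) (Z : Matrix (Fin n) (Fin m) ℂ) :
    frobSq (U * Z) = frobSq Z := by
  rw [frobSq_eq_trace, frobSq_eq_trace]
  congr 1
  rw [Matrix.conjTranspose_mul]
  rw [show Zᴴ * Uᴴ * (U * Z) = Zᴴ * (Uᴴ * U) * Z by noncomm_ring [Matrix.mul_assoc]]
  rw [show Uᴴ * U = 1 from h, Matrix.mul_one]

lemma frobSq_mul_right {n m : ℕ} (V : Matrix (Fin m) (Fin m) ℂ)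
    (h : V * star V = 1) (Z : Matrix (Fin n) (Fin m) ℂ) :
    frobSq (Z * V) = frobSq Z := by
  rw [frobSq_eq_trace, frobSq_eq_trace]
  congr 1
  rw [Matrix.conjTranspose_mul]
  rw [show Vᴴ * Zᴴ * (Z * V) = Vᴴ * (Zᴴ * Z) * V by noncomm_ring [Matrix.mul_assoc]]
  rw [Matrix.trace_mul_cycle, ← Matrix.mul_assoc, show V * Vᴴ = 1 from h, Matrix.one_mul]

lemma frobSq_diag_le {n m : ℕ} (dx : Fin n → ℂ) (dy : Fin m → ℂ)
    (hx : ∀ i, ‖dx i‖ ≤ 1) (hy : ∀ j, ‖dy j‖ ≤ 1)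
    (Z : Matrix (Fin n) (Fin m) ℂ) :
    frobSq (Matrix.diagonal dx * Z * Matrix.diagonal dy) ≤ frobSq Z := by
  unfold frobSq
  refine Finset.sum_le_sum fun i _ => Finset.sum_le_sum fun j _ => ?_
  rw [Matrix.mul_diagonal, Matrix.diagonal_mul, norm_mul, norm_mul]
  have h0 : (0:ℝ) ≤ ‖Z i j‖ := norm_nonneg _
  have h1 : ‖dx i‖ * ‖Z i j‖ * ‖dy j‖
      ≤ ‖Z i j‖ := by
    have a1 : ‖dx i‖ * ‖Z i j‖ ≤ ‖Z i j‖ :=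
      mul_le_of_le_one_left h0 (hx i)
    have a2 : ‖dx i‖ * ‖Z i j‖ * ‖dy j‖
        ≤ ‖dx i‖ * ‖Z i j‖ :=
      mul_le_of_le_one_right (by positivity) (hy j)
    linarith
  have h2 : (0:ℝ) ≤ ‖dx i‖ * ‖Z i j‖ * ‖dy j‖ := by
    positivity
  exact pow_le_pow_left₀ h2 h1 2

lemma frobNorm_eq_norm {n m : ℕ} (Z : Matrix (Fin n) (Fin m) ℂ) :
    Real.sqrt (frobSq Z) = ‖Z‖ := by
  rw [Matrix.frobenius_norm_def, Real.sqrt_eq_rpow]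
  congr 1
  refine Finset.sum_congr rfl fun i _ => Finset.sum_congr rfl fun j _ => ?_
  rw [← Real.rpow_natCast (‖Z i j‖) 2]
  norm_num

lemma exp_contract {k : ℕ} (G : Matrix (Fin k) (Fin k) ℂ) (hG : G.PosSemidef)
    (c : ℂ) (hc : c.re ≤ 0) :
    ∃ (U : Matrix (Fin k) (Fin k) ℂ) (d : Fin k → ℂ),
      star U * U = 1 ∧ U * star U = 1 ∧ (∀ i, ‖d i‖ ≤ 1) ∧
      NormedSpace.exp (c • G) = U * Matrix.diagonal d * star U := by
  have hH := hG.1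
  set U : Matrix (Fin k) (Fin k) ℂ := (hH.eigenvectorUnitary : Matrix (Fin k) (Fin k) ℂ) with hU
  have h1 : star U * U = 1 := Matrix.mem_unitaryGroup_iff'.mp hH.eigenvectorUnitary.2
  have h2 : U * star U = 1 := Matrix.mem_unitaryGroup_iff.mp hH.eigenvectorUnitary.2
  have hUinv : U⁻¹ = star U := Matrix.inv_eq_right_inv h2
  refine ⟨U, fun i => Complex.exp (c * (hH.eigenvalues i : ℂ)), h1, h2, ?_, ?_⟩
  · intro i
    rw [Complex.norm_exp]
    have h0 : 0 ≤ hH.eigenvalues i := hG.eigenvalues_nonneg i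
    have : (c * (hH.eigenvalues i : ℂ)).re = c.re * hH.eigenvalues i := by
      simp [Complex.mul_re]
    rw [this]
    exact Real.exp_le_one_iff.mpr (mul_nonpos_of_nonpos_of_nonneg hc h0)
  · have hspec := hH.spectral_theorem
    have : c • G = U * Matrix.diagonal (fun i => c * (hH.eigenvalues i : ℂ)) * U⁻¹ := by
      rw [hUinv]
      conv_lhs => rw [hspec]
      rw [Unitary.conjStarAlgAut_apply, ← hU, ← Matrix.smul_mul, ← Matrix.mul_smul, ← Matrix.diagonal_smul]
      have h3 : (c • (RCLike.ofReal ∘ hH.eigenvalues) : Fin k → ℂ)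
          = fun i => c * (hH.eigenvalues i : ℂ) := by
        funext i; simp [Function.comp_apply, smul_eq_mul]
      rw [h3]
    rw [this, Matrix.exp_conj _ _ (⟨⟨U, star U, by exact h2, by exact h1⟩, rfl⟩ : IsUnit U),
      Matrix.exp_diagonal, hUinv, Pi.exp_def]
    congr 2
    ext i
    simp [Complex.exp_eq_exp_ℂ]

lemma scalar_lip (κ ξ γ δ : ℝ) (hδ : 0 ≤ δ) (a b : ℂ)
    (ha : ‖a‖ ≤ δ) (hb : ‖b‖ ≤ δ) :
    ‖(-((κ : ℂ) + (ξ : ℂ) * Complex.I) * ↑(‖a‖ ^ 2) * a + (γ : ℂ) * a)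
      - (-((κ : ℂ) + (ξ : ℂ) * Complex.I) * ↑(‖b‖ ^ 2) * b + (γ : ℂ) * b)‖
      ≤ (3 * Real.sqrt (κ ^ 2 + ξ ^ 2) * δ ^ 2 + |γ|) * ‖a - b‖ := by
  set c : ℂ := -((κ : ℂ) + (ξ : ℂ) * Complex.I) with hc
  set r := ‖a‖ with hr
  set s := ‖b‖ with hs
  have hr0 : 0 ≤ r := norm_nonneg a
  have hs0 : 0 ≤ s := norm_nonneg b
  have hC : ‖c‖ = Real.sqrt (κ ^ 2 + ξ ^ 2) := by
    rw [hc, norm_neg, Complex.norm_add_mul_I]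
  have hC0 : 0 ≤ Real.sqrt (κ ^ 2 + ξ ^ 2) := Real.sqrt_nonneg _
  have hab : |r - s| ≤ ‖a - b‖ := by
    simpa [hr, hs] using abs_norm_sub_norm_le a b
  have hd0 : 0 ≤ ‖a - b‖ := norm_nonneg _
  have key : c * (↑(r ^ 2) : ℂ) * a + (γ : ℂ) * a - (c * (↑(s ^ 2) : ℂ) * b + (γ : ℂ) * b)
      = c * ((↑(r ^ 2) : ℂ) * (a - b) + ((↑(r ^ 2) : ℂ) - (↑(s ^ 2) : ℂ)) * b)
        + (γ : ℂ) * (a - b) := by ring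
  rw [key]
  calc ‖c * ((↑(r ^ 2) : ℂ) * (a - b) + ((↑(r ^ 2) : ℂ) - (↑(s ^ 2) : ℂ)) * b)
        + (γ : ℂ) * (a - b)‖
      ≤ ‖c * ((↑(r ^ 2) : ℂ) * (a - b) + ((↑(r ^ 2) : ℂ) - (↑(s ^ 2) : ℂ)) * b)‖
        + ‖(γ : ℂ) * (a - b)‖ := norm_add_le _ _
    _ ≤ Real.sqrt (κ ^ 2 + ξ ^ 2) * (r ^ 2 * ‖a - b‖ + |r ^ 2 - s ^ 2| * s)
        + |γ| * ‖a - b‖ := by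
        rw [norm_mul, norm_mul, hC]
        refine add_le_add (mul_le_mul_of_nonneg_left ?_ hC0) (le_of_eq ?_)
        · calc ‖(↑(r ^ 2) : ℂ) * (a - b) + ((↑(r ^ 2) : ℂ) - (↑(s ^ 2) : ℂ)) * b‖
              ≤ ‖(↑(r ^ 2) : ℂ) * (a - b)‖
                + ‖((↑(r ^ 2) : ℂ) - (↑(s ^ 2) : ℂ)) * b‖ := norm_add_le _ _
            _ = r ^ 2 * ‖a - b‖ + |r ^ 2 - s ^ 2| * s := by
                rw [norm_mul, norm_mul, ← Complex.ofReal_sub, Complex.norm_real,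
                  Complex.norm_real, Real.norm_eq_abs, Real.norm_eq_abs, abs_of_nonneg (by positivity : (0:ℝ) ≤ r ^ 2), ← hs]
        · rw [Complex.norm_real, Real.norm_eq_abs]
    _ ≤ (3 * Real.sqrt (κ ^ 2 + ξ ^ 2) * δ ^ 2 + |γ|) * ‖a - b‖ := by
        have h1 : |r ^ 2 - s ^ 2| ≤ 2 * δ * ‖a - b‖ := by
          have : r ^ 2 - s ^ 2 = (r - s) * (r + s) := by ring
          rw [this, abs_mul, abs_of_nonneg (by linarith : (0:ℝ) ≤ r + s)]
          have : r + s ≤ 2 * δ := by linarith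
          nlinarith [abs_nonneg (r - s)]
        have h2 : r ^ 2 ≤ δ ^ 2 := by nlinarith
        have i1 : r ^ 2 * ‖a - b‖ ≤ δ ^ 2 * ‖a - b‖ :=
          mul_le_mul_of_nonneg_right h2 hd0
        have i2a : |r ^ 2 - s ^ 2| * s ≤ |r ^ 2 - s ^ 2| * δ :=
          mul_le_mul_of_nonneg_left hb (abs_nonneg _)
        have i2b : |r ^ 2 - s ^ 2| * δ ≤ (2 * δ * ‖a - b‖) * δ :=
          mul_le_mul_of_nonneg_right h1 hδ
        have inner : r ^ 2 * ‖a - b‖ + |r ^ 2 - s ^ 2| * s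
            ≤ 3 * δ ^ 2 * ‖a - b‖ := by nlinarith
        have final := mul_le_mul_of_nonneg_left inner hC0
        nlinarith

lemma gnl_lipschitz (κ ξ γ δ : ℝ) (hδ : 0 ≤ δ) {n m : ℕ} :
    LipschitzOnWith (Real.toNNReal (3 * Real.sqrt (κ ^ 2 + ξ ^ 2) * δ ^ 2 + |γ|))
      (Gnl κ ξ γ : Matrix (Fin n) (Fin m) ℂ → Matrix (Fin n) (Fin m) ℂ)
      {U : Matrix (Fin n) (Fin m) ℂ | ∀ i j, ‖U i j‖ ≤ δ} := by
  set L := 3 * Real.sqrt (κ ^ 2 + ξ ^ 2) * δ ^ 2 + |γ| with hLdef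
  have hL0 : 0 ≤ L := by positivity
  rw [lipschitzOnWith_iff_dist_le_mul]
  intro U hU V hV
  rw [dist_eq_norm, dist_eq_norm, Real.coe_toNNReal _ hL0, ← frobNorm_eq_norm,
    ← frobNorm_eq_norm]
  have hsum : frobSq (Gnl κ ξ γ U - Gnl κ ξ γ V) ≤ L ^ 2 * frobSq (U - V) := by
    unfold frobSq
    rw [Finset.mul_sum]
    refine Finset.sum_le_sum fun i _ => ?_
    rw [Finset.mul_sum]
    refine Finset.sum_le_sum fun j _ => ?_
    have h := scalar_lip κ ξ γ δ hδ (U i j) (V i j) (hU i j) (hV i j)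
    have hterm : ‖(Gnl κ ξ γ U - Gnl κ ξ γ V) i j‖
        ≤ L * ‖(U - V) i j‖ := by
      simpa [Gnl, Matrix.sub_apply] using h
    calc ‖(Gnl κ ξ γ U - Gnl κ ξ γ V) i j‖ ^ 2
        ≤ (L * ‖(U - V) i j‖) ^ 2 :=
          pow_le_pow_left₀ (norm_nonneg _) hterm 2
      _ = L ^ 2 * ‖(U - V) i j‖ ^ 2 := by ring
  calc Real.sqrt (frobSq (Gnl κ ξ γ U - Gnl κ ξ γ V))
      ≤ Real.sqrt (L ^ 2 * frobSq (U - V)) := Real.sqrt_le_sqrt hsum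
    _ = L * Real.sqrt (frobSq (U - V)) := by
        rw [Real.sqrt_mul (sq_nonneg L), Real.sqrt_sq hL0]

theorem stmt_10 {n m : ℕ} (ν η : ℝ) (hν : 0 < ν)
    (Gx : Matrix (Fin n) (Fin n) ℂ) (Gy : Matrix (Fin m) (Fin m) ℂ)
    (hGx : Gx.PosSemidef) (hGy : Gy.PosSemidef)
    (Ax : Matrix (Fin n) (Fin n) ℂ) (Ay : Matrix (Fin m) (Fin m) ℂ)
    (hAx : Ax = (-((ν : ℂ) + (η : ℂ) * Complex.I)) • Gx)
    (hAy : Ay = (-((ν : ℂ) + (η : ℂ) * Complex.I)) • Gy)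
    (κ ξ γ δ τ : ℝ) (hδ : 0 ≤ δ) (hτ : 0 ≤ τ)
    (L : ℝ) (hL : L = 3 * Real.sqrt (κ ^ 2 + ξ ^ 2) * δ ^ 2 + |γ|)
    (u v : ℝ → Matrix (Fin n) (Fin m) ℂ)
    (hu : ∀ t ∈ Set.Icc (0 : ℝ) τ, HasDerivAt u (Gnl κ ξ γ (u t)) t)
    (hv : ∀ t ∈ Set.Icc (0 : ℝ) τ, HasDerivAt v (Gnl κ ξ γ (v t)) t)
    (hub : ∀ t ∈ Set.Icc (0 : ℝ) τ, ∀ i j, ‖u t i j‖ ≤ δ)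
    (hvb : ∀ t ∈ Set.Icc (0 : ℝ) τ, ∀ i j, ‖v t i j‖ ≤ δ) :
    frobNorm (NormedSpace.exp (τ • Ax) * u τ * NormedSpace.exp (τ • Ay) -
        NormedSpace.exp (τ • Ax) * v τ * NormedSpace.exp (τ • Ay)) ≤
      Real.exp (L * τ) * frobNorm (u 0 - v 0) := by
  have hL0 : 0 ≤ L := by rw [hL]; positivity
  set c0 : ℂ := -((ν : ℂ) + (η : ℂ) * Complex.I) with hc0
  have hre : ((τ : ℂ) * c0).re ≤ 0 := by
    have : ((τ : ℂ) * c0).re = τ * (-ν) := by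
      simp [hc0, Complex.mul_re]
    rw [this]
    nlinarith
  have hτAx : τ • Ax = ((τ : ℂ) * c0) • Gx := by
    rw [hAx, ← smul_assoc]
    norm_num [Complex.real_smul]
  have hτAy : τ • Ay = ((τ : ℂ) * c0) • Gy := by
    rw [hAy, ← smul_assoc]
    norm_num [Complex.real_smul]
  obtain ⟨Ux, dx, hx1, hx2, hxd, hxe⟩ := exp_contract Gx hGx _ hre
  obtain ⟨Vy, dy, hy1, hy2, hyd, hye⟩ := exp_contract Gy hGy _ hre
  -- Step 1: Gronwall estimate
  have grf : dist (u τ) (v τ) ≤ dist (u 0) (v 0) * Real.exp (L * τ) := by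
    have hlip : ∀ _t : ℝ, LipschitzOnWith (Real.toNNReal L)
        (Gnl κ ξ γ : Matrix (Fin n) (Fin m) ℂ → Matrix (Fin n) (Fin m) ℂ)
        {U : Matrix (Fin n) (Fin m) ℂ | ∀ i j, ‖U i j‖ ≤ δ} := by
      intro _t
      rw [hL]
      exact gnl_lipschitz κ ξ γ δ hδ
    have := dist_le_of_trajectories_ODE_of_mem (v := fun _ U => Gnl κ ξ γ U)
      (s := fun _ => {U : Matrix (Fin n) (Fin m) ℂ | ∀ i j, ‖U i j‖ ≤ δ})
      (K := Real.toNNReal L) (fun t _ => hlip t)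
      (fun t ht => (hu t ht).continuousAt.continuousWithinAt)
      (fun t ht => (hu t (Set.Ico_subset_Icc_self ht)).hasDerivWithinAt)
      (fun t ht => hub t (Set.Ico_subset_Icc_self ht))
      (fun t ht => (hv t ht).continuousAt.continuousWithinAt)
      (fun t ht => (hv t (Set.Ico_subset_Icc_self ht)).hasDerivWithinAt)
      (fun t ht => hvb t (Set.Ico_subset_Icc_self ht))
      (le_refl (dist (u 0) (v 0))) τ ⟨hτ, le_refl τ⟩
    rwa [sub_zero, Real.coe_toNNReal _ hL0] at this
  -- Step 2: contraction of the linear flow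
  set W := u τ - v τ with hW
  have factor : NormedSpace.exp (τ • Ax) * u τ * NormedSpace.exp (τ • Ay) -
      NormedSpace.exp (τ • Ax) * v τ * NormedSpace.exp (τ • Ay)
      = NormedSpace.exp (τ • Ax) * W * NormedSpace.exp (τ • Ay) := by
    rw [hW, Matrix.mul_sub, Matrix.sub_mul]
  have hstep : frobSq (NormedSpace.exp (τ • Ax) * W * NormedSpace.exp (τ • Ay))
      ≤ frobSq W := by
    rw [hτAx, hτAy, hxe, hye]
    have e1 : Ux * Matrix.diagonal dx * star Ux * W * (Vy * Matrix.diagonal dy * star Vy)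
        = Ux * (Matrix.diagonal dx * (star Ux * (W * Vy)) * Matrix.diagonal dy) * star Vy := by
      simp only [Matrix.mul_assoc]
    rw [e1, frobSq_mul_right (star Vy) (by rw [star_star]; exact hy1),
      frobSq_mul_left Ux hx1]
    calc frobSq (Matrix.diagonal dx * (star Ux * (W * Vy)) * Matrix.diagonal dy)
        ≤ frobSq (star Ux * (W * Vy)) := frobSq_diag_le dx dy hxd hyd _
      _ = frobSq (W * Vy) := frobSq_mul_left (star Ux) (by rw [star_star]; exact hx2) _
      _ = frobSq W := frobSq_mul_right Vy hy2 _
  -- Conclusion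
  rw [factor, frobNorm_def', frobNorm_def']
  calc Real.sqrt (frobSq (NormedSpace.exp (τ • Ax) * W * NormedSpace.exp (τ • Ay)))
      ≤ Real.sqrt (frobSq W) := Real.sqrt_le_sqrt hstep
    _ = dist (u τ) (v τ) := by rw [frobNorm_eq_norm, dist_eq_norm, hW]
    _ ≤ dist (u 0) (v 0) * Real.exp (L * τ) := grf
    _ = Real.exp (L * τ) * Real.sqrt (frobSq (u 0 - v 0)) := by
        rw [dist_eq_norm, ← frobNorm_eq_norm, mul_comm]
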